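/- For all natural numbers k < n, the bracket number satisfies [n choose k] ≤ C(T_n, T_k), where T_m = m(m+1)/2 is the m-th triangular number. -/

import Mathlib

/-- The bracket numbers, defined by the recursion
`[n, k] = [n-1, k] + C(n,k) * [n-1, k-1]` with `[n, 0] = 1` and `[n, n] = 1`. -/
def brack : ℕ → ℕ → ℕ
  | _, 0 => 1
  | 0, _ + 1 => 0
  | n + 1, k + 1 =>
    if n + 1 = k + 1 then 1
    else brack n (k + 1) + Nat.choose (n + 1) (k + 1) * brack n k

/-- The `n`-th triangular number. -/
def T (n : ℕ) : ℕ := n * (n + 1) / 2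

lemma T_succ (n : ℕ) : T (n + 1) = T n + (n + 1) := by
  unfold T
  have h : (n + 1) * (n + 1 + 1) = n * (n + 1) + 2 * (n + 1) := by ring
  rw [h, Nat.add_mul_div_left _ _ (by norm_num : 0 < 2)]

lemma T_ge (k : ℕ) : k ≤ T k := by
  induction k with
  | zero => simp [T]
  | succ n ih => rw [T_succ]; omega

lemma key (n k : ℕ) :
    Nat.choose (T n) (T (k + 1)) + Nat.choose (n + 1) (k + 1) * Nat.choose (T n) (T k) ≤
      Nat.choose (T (n + 1)) (T (k + 1)) := by
  rw [T_succ n]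
  have h1 : ((T (k + 1), 0) : ℕ × ℕ) ∈ Finset.HasAntidiagonal.antidiagonal (T (k + 1)) := by simp
  have h2 : ((T k, k + 1) : ℕ × ℕ) ∈ Finset.HasAntidiagonal.antidiagonal (T (k + 1)) := by
    simp [T_succ k]
  have hne : ((T (k + 1), 0) : ℕ × ℕ) ≠ (T k, k + 1) := by simp
  calc Nat.choose (T n) (T (k + 1)) + Nat.choose (n + 1) (k + 1) * Nat.choose (T n) (T k)
      = ∑ ij ∈ {((T (k + 1), 0) : ℕ × ℕ), (T k, k + 1)},
          Nat.choose (T n) ij.1 * Nat.choose (n + 1) ij.2 := by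
        rw [Finset.sum_pair hne]; simp [Nat.mul_comm]
    _ ≤ ∑ ij ∈ Finset.HasAntidiagonal.antidiagonal (T (k + 1)),
          Nat.choose (T n) ij.1 * Nat.choose (n + 1) ij.2 := by
        apply Finset.sum_le_sum_of_subset
        intro x hx
        simp only [Finset.mem_insert, Finset.mem_singleton] at hx
        rcases hx with rfl | rfl <;> [exact h1; exact h2]
    _ = Nat.choose (T n + (n + 1)) (T (k + 1)) := (Nat.add_choose_eq _ _ _).symm

lemma brack_le (n k : ℕ) (hkn : k ≤ n) : brack n k ≤ Nat.choose (T n) (T k) := by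
  induction n generalizing k with
  | zero =>
    interval_cases k
    simp [brack]
  | succ n ih =>
    match k with
    | 0 => simp [brack, T, Nat.choose_pos (Nat.zero_le _)]
    | k + 1 =>
      rcases Nat.eq_or_lt_of_le hkn with heq | hlt
      · rw [heq, brack]
        simp [Nat.choose_self]
      · have hk : k + 1 ≤ n := by omega
        rw [brack]
        rw [if_neg (by omega)]
        calc brack n (k + 1) + Nat.choose (n + 1) (k + 1) * brack n k
            ≤ Nat.choose (T n) (T (k + 1)) + Nat.choose (n + 1) (k + 1) * Nat.choose (T n) (T k) :=
              Nat.add_le_add (ih (k + 1) hk) (Nat.mul_le_mul_left _ (ih k (by omega)))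
          _ ≤ Nat.choose (T (n + 1)) (T (k + 1)) := key n k

/-- For `k < n`, `[n, k] ≤ C(T_n, T_k)`. -/
theorem brack_le_choose_triangular (n k : ℕ) (hkn : k < n) :
    brack n k ≤ Nat.choose (T n) (T k) := by
  exact brack_le n k hkn.le
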